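/- Let m ≥ 3, let Pᵢ, Pⱼ ∈ EuclideanSpace ℝ (Fin 3), and let Q : ZMod m → EuclideanSpace ℝ (Fin 3). For each α ∈ ZMod m assume the vectors Pⱼ−Pᵢ, Q(α)−Pᵢ, Q(α+1)−Pᵢ are linearly independent, set δ_α := det(Pⱼ−Pᵢ, Q(α)−Pᵢ, Q(α+1)−Pᵢ) (3×3 determinant of the column vectors) and T_α := convexHull ℝ {Pᵢ, Pⱼ, Q(α), Q(α+1)}, and assume the interiors of the sets T_α, α ∈ ZMod m, are pairwise disjoint. For each α let gᵢ^α, gⱼ^α ∈ EuclideanSpace ℝ (Fin 3) satisfy ⟪gᵢ^α, Pᵢ−Pⱼ⟫ = 1, ⟪gᵢ^α, Q(α)−Pⱼ⟫ = 0, ⟪gᵢ^α, Q(α+1)−Pⱼ⟫ = 0, and ⟪gⱼ^α, Pⱼ−Pᵢ⟫ = 1, ⟪gⱼ^α, Q(α)−Pᵢ⟫ = 0, ⟪gⱼ^α, Q(α+1)−Pᵢ⟫ = 0. Then the 3×3 matrix M with entries M(q,s) := ∑_{α ∈ ZMod m} (|δ_α|/6)·(gⱼ^α)_s·(gᵢ^α)_q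 is symmetric: M = Mᵀ. -/

import Mathlib

set_option maxHeartbeats 1000000

open RealInnerProductSpace Matrix

section Aux

open Set

private abbrev E3 := EuclideanSpace ℝ (Fin 3)

private lemma stmt6_hIP (x y : E3) : ⟪x, y⟫ = x 0 * y 0 + x 1 * y 1 + x 2 * y 2 := by
  simp [PiLp.inner_apply, RCLike.inner_apply, conj_trivial, Fin.sum_univ_three]
  ring

private lemma stmt6_det3_coords (x y z : E3) :
    (Matrix.of fun p q : Fin 3 => (![x, y, z] q) p).det
      = x 0 * (y 1 * z 2 - y 2 * z 1) - x 1 * (y 0 * z 2 - y 2 * z 0)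
        + x 2 * (y 0 * z 1 - y 1 * z 0) := by
  rw [Matrix.det_fin_three]
  simp only [Matrix.of_apply, Matrix.cons_val_zero, Matrix.cons_val_one, Matrix.head_cons,
    Matrix.cons_val_two, Matrix.tail_cons]
  ring

private lemma stmt6_det_ne_zero (w : Fin 3 → E3) (h : LinearIndependent ℝ w) :
    (Matrix.of fun p q : Fin 3 => (w q) p).det ≠ 0 := by
  intro h0
  obtain ⟨c, hc, hc0⟩ := (Matrix.exists_mulVec_eq_zero_iff).2 h0
  have hz : ∑ q : Fin 3, c q • w q = 0 := by
    ext p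
    have := congrFun hc0 p
    simp only [Matrix.mulVec, dotProduct, Matrix.of_apply, Pi.zero_apply] at this
    have hs : (∑ q : Fin 3, c q • w q) p = ∑ q : Fin 3, (c q • w q) p :=
      by rw [WithLp.ofLp_sum, Finset.sum_apply]
    rw [hs]
    simp only [PiLp.zero_apply, PiLp.smul_apply, smul_eq_mul]
    simpa [mul_comm] using this
  have := Fintype.linearIndependent_iff.1 h c hz
  exact hc (funext fun i => this i)

private lemma stmt6_cross_key (e a b u v : Fin 3 → ℝ) (d : ℝ)
    (hdd : d = e 0 * (a 1 * b 2 - a 2 * b 1) - e 1 * (a 0 * b 2 - a 2 * b 0)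
      + e 2 * (a 0 * b 1 - a 1 * b 0))
    (hd : d ≠ 0)
    (hue : u 0 * e 0 + u 1 * e 1 + u 2 * e 2 = -1)
    (hua : u 0 * a 0 + u 1 * a 1 + u 2 * a 2 = -1)
    (hub : u 0 * b 0 + u 1 * b 1 + u 2 * b 2 = -1)
    (hve : v 0 * e 0 + v 1 * e 1 + v 2 * e 2 = 1)
    (hva : v 0 * a 0 + v 1 * a 1 + v 2 * a 2 = 0)
    (hvb : v 0 * b 0 + v 1 * b 1 + v 2 * b 2 = 0) :
    d * (u 1 * v 2 - u 2 * v 1) = b 0 - a 0 ∧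
    d * (u 2 * v 0 - u 0 * v 2) = b 1 - a 1 ∧
    d * (u 0 * v 1 - u 1 * v 0) = b 2 - a 2 := by
  subst hdd
  have hu0 : (e 0 * (a 1 * b 2 - a 2 * b 1) - e 1 * (a 0 * b 2 - a 2 * b 0)
      + e 2 * (a 0 * b 1 - a 1 * b 0)) * u 0
      = -((a 1 * b 2 - a 2 * b 1) + (e 2 * b 1 - e 1 * b 2) + (e 1 * a 2 - e 2 * a 1)) := by
    linear_combination (a 1 * b 2 - a 2 * b 1) * hue + (e 2 * b 1 - e 1 * b 2) * hua
      + (e 1 * a 2 - e 2 * a 1) * hub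
  have hu1 : (e 0 * (a 1 * b 2 - a 2 * b 1) - e 1 * (a 0 * b 2 - a 2 * b 0)
      + e 2 * (a 0 * b 1 - a 1 * b 0)) * u 1
      = -((a 2 * b 0 - a 0 * b 2) + (e 0 * b 2 - e 2 * b 0) + (e 2 * a 0 - e 0 * a 2)) := by
    linear_combination (a 2 * b 0 - a 0 * b 2) * hue + (e 0 * b 2 - e 2 * b 0) * hua
      + (e 2 * a 0 - e 0 * a 2) * hub
  have hu2 : (e 0 * (a 1 * b 2 - a 2 * b 1) - e 1 * (a 0 * b 2 - a 2 * b 0)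
      + e 2 * (a 0 * b 1 - a 1 * b 0)) * u 2
      = -((a 0 * b 1 - a 1 * b 0) + (e 1 * b 0 - e 0 * b 1) + (e 0 * a 1 - e 1 * a 0)) := by
    linear_combination (a 0 * b 1 - a 1 * b 0) * hue + (e 1 * b 0 - e 0 * b 1) * hua
      + (e 0 * a 1 - e 1 * a 0) * hub
  have hv0 : (e 0 * (a 1 * b 2 - a 2 * b 1) - e 1 * (a 0 * b 2 - a 2 * b 0)
      + e 2 * (a 0 * b 1 - a 1 * b 0)) * v 0 = a 1 * b 2 - a 2 * b 1 := by
    linear_combination (a 1 * b 2 - a 2 * b 1) * hve + (e 2 * b 1 - e 1 * b 2) * hva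
      + (e 1 * a 2 - e 2 * a 1) * hvb
  have hv1 : (e 0 * (a 1 * b 2 - a 2 * b 1) - e 1 * (a 0 * b 2 - a 2 * b 0)
      + e 2 * (a 0 * b 1 - a 1 * b 0)) * v 1 = a 2 * b 0 - a 0 * b 2 := by
    linear_combination (a 2 * b 0 - a 0 * b 2) * hve + (e 0 * b 2 - e 2 * b 0) * hva
      + (e 2 * a 0 - e 0 * a 2) * hvb
  have hv2 : (e 0 * (a 1 * b 2 - a 2 * b 1) - e 1 * (a 0 * b 2 - a 2 * b 0)
      + e 2 * (a 0 * b 1 - a 1 * b 0)) * v 2 = a 0 * b 1 - a 1 * b 0 := by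
    linear_combination (a 0 * b 1 - a 1 * b 0) * hve + (e 1 * b 0 - e 0 * b 1) * hva
      + (e 0 * a 1 - e 1 * a 0) * hvb
  refine ⟨mul_right_cancel₀ hd ?_, mul_right_cancel₀ hd ?_, mul_right_cancel₀ hd ?_⟩
  · calc (e 0 * (a 1 * b 2 - a 2 * b 1) - e 1 * (a 0 * b 2 - a 2 * b 0) + e 2 * (a 0 * b 1 - a 1 * b 0)) * (u 1 * v 2 - u 2 * v 1) * (e 0 * (a 1 * b 2 - a 2 * b 1) - e 1 * (a 0 * b 2 - a 2 * b 0) + e 2 * (a 0 * b 1 - a 1 * b 0))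
        = ((e 0 * (a 1 * b 2 - a 2 * b 1) - e 1 * (a 0 * b 2 - a 2 * b 0) + e 2 * (a 0 * b 1 - a 1 * b 0)) * u 1) * ((e 0 * (a 1 * b 2 - a 2 * b 1) - e 1 * (a 0 * b 2 - a 2 * b 0) + e 2 * (a 0 * b 1 - a 1 * b 0)) * v 2) - ((e 0 * (a 1 * b 2 - a 2 * b 1) - e 1 * (a 0 * b 2 - a 2 * b 0) + e 2 * (a 0 * b 1 - a 1 * b 0)) * u 2) * ((e 0 * (a 1 * b 2 - a 2 * b 1) - e 1 * (a 0 * b 2 - a 2 * b 0) + e 2 * (a 0 * b 1 - a 1 * b 0)) * v 1) := by ring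
      _ = (-((a 2 * b 0 - a 0 * b 2) + (e 0 * b 2 - e 2 * b 0) + (e 2 * a 0 - e 0 * a 2))) * (a 0 * b 1 - a 1 * b 0)
          - (-((a 0 * b 1 - a 1 * b 0) + (e 1 * b 0 - e 0 * b 1) + (e 0 * a 1 - e 1 * a 0))) * (a 2 * b 0 - a 0 * b 2) := by
            rw [hu1, hu2, hv1, hv2]
      _ = (b 0 - a 0) * (e 0 * (a 1 * b 2 - a 2 * b 1) - e 1 * (a 0 * b 2 - a 2 * b 0) + e 2 * (a 0 * b 1 - a 1 * b 0)) := by ring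
  · calc (e 0 * (a 1 * b 2 - a 2 * b 1) - e 1 * (a 0 * b 2 - a 2 * b 0) + e 2 * (a 0 * b 1 - a 1 * b 0)) * (u 2 * v 0 - u 0 * v 2) * (e 0 * (a 1 * b 2 - a 2 * b 1) - e 1 * (a 0 * b 2 - a 2 * b 0) + e 2 * (a 0 * b 1 - a 1 * b 0))
        = ((e 0 * (a 1 * b 2 - a 2 * b 1) - e 1 * (a 0 * b 2 - a 2 * b 0) + e 2 * (a 0 * b 1 - a 1 * b 0)) * u 2) * ((e 0 * (a 1 * b 2 - a 2 * b 1) - e 1 * (a 0 * b 2 - a 2 * b 0) + e 2 * (a 0 * b 1 - a 1 * b 0)) * v 0) - ((e 0 * (a 1 * b 2 - a 2 * b 1) - e 1 * (a 0 * b 2 - a 2 * b 0) + e 2 * (a 0 * b 1 - a 1 * b 0)) * u 0) * ((e 0 * (a 1 * b 2 - a 2 * b 1) - e 1 * (a 0 * b 2 - a 2 * b 0) + e 2 * (a 0 * b 1 - a 1 * b 0)) * v 2) := by ring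
      _ = (-((a 0 * b 1 - a 1 * b 0) + (e 1 * b 0 - e 0 * b 1) + (e 0 * a 1 - e 1 * a 0))) * (a 1 * b 2 - a 2 * b 1)
          - (-((a 1 * b 2 - a 2 * b 1) + (e 2 * b 1 - e 1 * b 2) + (e 1 * a 2 - e 2 * a 1))) * (a 0 * b 1 - a 1 * b 0) := by
            rw [hu2, hu0, hv0, hv2]
      _ = (b 1 - a 1) * (e 0 * (a 1 * b 2 - a 2 * b 1) - e 1 * (a 0 * b 2 - a 2 * b 0) + e 2 * (a 0 * b 1 - a 1 * b 0)) := by ring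
  · calc (e 0 * (a 1 * b 2 - a 2 * b 1) - e 1 * (a 0 * b 2 - a 2 * b 0) + e 2 * (a 0 * b 1 - a 1 * b 0)) * (u 0 * v 1 - u 1 * v 0) * (e 0 * (a 1 * b 2 - a 2 * b 1) - e 1 * (a 0 * b 2 - a 2 * b 0) + e 2 * (a 0 * b 1 - a 1 * b 0))
        = ((e 0 * (a 1 * b 2 - a 2 * b 1) - e 1 * (a 0 * b 2 - a 2 * b 0) + e 2 * (a 0 * b 1 - a 1 * b 0)) * u 0) * ((e 0 * (a 1 * b 2 - a 2 * b 1) - e 1 * (a 0 * b 2 - a 2 * b 0) + e 2 * (a 0 * b 1 - a 1 * b 0)) * v 1) - ((e 0 * (a 1 * b 2 - a 2 * b 1) - e 1 * (a 0 * b 2 - a 2 * b 0) + e 2 * (a 0 * b 1 - a 1 * b 0)) * u 1) * ((e 0 * (a 1 * b 2 - a 2 * b 1) - e 1 * (a 0 * b 2 - a 2 * b 0) + e 2 * (a 0 * b 1 - a 1 * b 0)) * v 0) := by ring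
      _ = (-((a 1 * b 2 - a 2 * b 1) + (e 2 * b 1 - e 1 * b 2) + (e 1 * a 2 - e 2 * a 1))) * (a 2 * b 0 - a 0 * b 2)
          - (-((a 2 * b 0 - a 0 * b 2) + (e 0 * b 2 - e 2 * b 0) + (e 2 * a 0 - e 0 * a 2))) * (a 1 * b 2 - a 2 * b 1) := by
            rw [hu0, hu1, hv1, hv0]
      _ = (b 2 - a 2) * (e 0 * (a 1 * b 2 - a 2 * b 1) - e 1 * (a 0 * b 2 - a 2 * b 0) + e 2 * (a 0 * b 1 - a 1 * b 0)) := by ring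

private def stmt6_finEquiv : Fin 3 ≃ {x : Fin 4 // x ≠ 0} where
  toFun i := ⟨i.succ, Fin.succ_ne_zero i⟩
  invFun x := x.1.pred x.2
  left_inv i := by simp
  right_inv x := by simp

private lemma stmt6_ai4 (P0 P1 P2 P3 : E3)
    (h : LinearIndependent ℝ ![P1 - P0, P2 - P0, P3 - P0]) :
    AffineIndependent ℝ ![P0, P1, P2, P3] := by
  rw [affineIndependent_iff_linearIndependent_vsub ℝ _ 0]
  rw [← linearIndependent_equiv stmt6_finEquiv]
  convert h using 1
  funext i
  fin_cases i <;> simp [stmt6_finEquiv]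
  rfl

private lemma stmt6_span4 (P0 P1 P2 P3 : E3) (h : AffineIndependent ℝ ![P0, P1, P2, P3]) :
    affineSpan ℝ (range ![P0, P1, P2, P3]) = ⊤ := by
  rw [h.affineSpan_eq_top_iff_card_eq_finrank_add_one]
  simp

private lemma stmt6_range4 (P0 P1 P2 P3 : E3) : range ![P0, P1, P2, P3] = {P0, P1, P2, P3} := by
  ext x
  constructor
  · rintro ⟨i, rfl⟩; fin_cases i <;> simp
  · rintro (rfl | rfl | rfl | rfl)
    exacts [⟨0, rfl⟩, ⟨1, rfl⟩, ⟨2, rfl⟩, ⟨3, rfl⟩]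

private lemma stmt6_not_disjoint (P0 P1 A B C : E3)
    (h1 : LinearIndependent ℝ ![P1 - P0, A - P0, B - P0])
    (h2 : LinearIndependent ℝ ![P1 - P0, B - P0, C - P0])
    (d1 d2 : ℝ)
    (hd1 : d1 = (Matrix.of fun p q : Fin 3 => (![P1 - P0, A - P0, B - P0] q) p).det)
    (hd2 : d2 = (Matrix.of fun p q : Fin 3 => (![P1 - P0, B - P0, C - P0] q) p).det)
    (hneg : d1 * d2 < 0) :
    ¬ Disjoint (interior (convexHull ℝ ({P0, P1, A, B} : Set E3)))
      (interior (convexHull ℝ ({P0, P1, B, C} : Set E3))) := by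
  classical
  -- coordinate component abbreviations (defeq)
  have hsub : ∀ (x y : E3) (p : Fin 3), (x - y) p = x p - y p := fun _ _ _ => rfl
  -- coefficients of A - P0 in the basis (P1-P0, B-P0, C-P0)
  have hcard : Fintype.card (Fin 3) = Module.finrank ℝ E3 := by simp
  set bas : Module.Basis (Fin 3) ℝ E3 := basisOfLinearIndependentOfCardEqFinrank h2 hcard with hbas
  have hbascoe : ⇑bas = ![P1 - P0, B - P0, C - P0] :=
    coe_basisOfLinearIndependentOfCardEqFinrank h2 hcard
  set c : Fin 3 → ℝ := fun i => bas.repr (A - P0) i with hc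
  have hrepr : A - P0 = c 0 • (P1 - P0) + c 1 • (B - P0) + c 2 • (C - P0) := by
    have := bas.sum_repr (A - P0)
    rw [Fin.sum_univ_three] at this
    rw [← this, hbascoe]
    simp [hc]
  have hcomp : ∀ p : Fin 3, A p - P0 p
      = c 0 * (P1 p - P0 p) + c 1 * (B p - P0 p) + c 2 * (C p - P0 p) := by
    intro p
    have := congrArg (fun x : E3 => x p) hrepr
    simpa [hsub, PiLp.add_apply, PiLp.smul_apply] using this
  -- determinant formulas
  have hd1e : d1 = (P1 0 - P0 0) * ((A 1 - P0 1) * (B 2 - P0 2) - (A 2 - P0 2) * (B 1 - P0 1))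
      - (P1 1 - P0 1) * ((A 0 - P0 0) * (B 2 - P0 2) - (A 2 - P0 2) * (B 0 - P0 0))
      + (P1 2 - P0 2) * ((A 0 - P0 0) * (B 1 - P0 1) - (A 1 - P0 1) * (B 0 - P0 0)) := by
    rw [hd1, stmt6_det3_coords]; simp [hsub]
  have hd2e : d2 = (P1 0 - P0 0) * ((B 1 - P0 1) * (C 2 - P0 2) - (B 2 - P0 2) * (C 1 - P0 1))
      - (P1 1 - P0 1) * ((B 0 - P0 0) * (C 2 - P0 2) - (B 2 - P0 2) * (C 0 - P0 0))
      + (P1 2 - P0 2) * ((B 0 - P0 0) * (C 1 - P0 1) - (B 1 - P0 1) * (C 0 - P0 0)) := by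
    rw [hd2, stmt6_det3_coords]; simp [hsub]
  have hc2 : d2 * c 2 = -d1 := by
    linear_combination (c 2) * hd2e + hd1e
      - (((P1 1 - P0 1) * (B 2 - P0 2) - (P1 2 - P0 2) * (B 1 - P0 1)) * hcomp 0
        + ((P1 2 - P0 2) * (B 0 - P0 0) - (P1 0 - P0 0) * (B 2 - P0 2)) * hcomp 1
        + ((P1 0 - P0 0) * (B 1 - P0 1) - (P1 1 - P0 1) * (B 0 - P0 0)) * hcomp 2)
  have hd2ne : d2 ≠ 0 := by rintro rfl; simp at hneg
  have hc2pos : 0 < c 2 := by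
    have h22 : 0 < d2 * d2 := mul_self_pos.2 hd2ne
    have hq : d2 * d2 * c 2 = -(d1 * d2) := by linear_combination d2 * hc2
    nlinarith [h22, hq, hneg]
  -- choose epsilon
  set K : ℝ := |c 0| + |c 1| + |c 2| + 1 with hK
  have hKpos : 0 < K := by positivity
  have hK1 : 1 ≤ K := by
    have := abs_nonneg (c 0); have := abs_nonneg (c 1); have := abs_nonneg (c 2); linarith
  set ε : ℝ := 1 / (6 * K) with hε
  have hε0 : 0 < ε := by positivity
  have hεK : ε * K = 1 / 6 := by
    rw [hε]; field_simp
  have hε6 : ε ≤ 1 / 6 := by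
    rw [hε]
    have h6 : (6:ℝ) ≤ 6 * K := by linarith
    calc 1 / (6 * K) ≤ 1 / 6 := by
          apply one_div_le_one_div_of_le (by norm_num) h6
      _ = 1/6 := by norm_num
  -- weights
  set w1 : Fin 4 → ℝ := ![(1 - ε)/3, (1 - ε)/3, ε, (1 - ε)/3] with hw1
  set w2 : Fin 4 → ℝ := ![(1 + 2*ε)/3 - ε*(c 0 + c 1 + c 2), (1 - ε)/3 + ε * c 0,
      (1 - ε)/3 + ε * c 1, ε * c 2] with hw2
  have hw1sum : ∑ i, w1 i = 1 := by rw [hw1]; simp [Fin.sum_univ_four]; ring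
  have hw2sum : ∑ i, w2 i = 1 := by rw [hw2]; simp [Fin.sum_univ_four]; ring
  have habs0 : ε * |c 0| ≤ 1/6 - ε := by
    have : ε * (|c 0| + 1) ≤ ε * K := by
      apply mul_le_mul_of_nonneg_left _ hε0.le
      have := abs_nonneg (c 1); have := abs_nonneg (c 2); linarith
    nlinarith [this, hεK]
  have habs1 : ε * |c 1| ≤ 1/6 - ε := by
    have : ε * (|c 1| + 1) ≤ ε * K := by
      apply mul_le_mul_of_nonneg_left _ hε0.le
      have := abs_nonneg (c 0); have := abs_nonneg (c 2); linarith
    nlinarith [this, hεK]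
  have habssum : ε * (c 0 + c 1 + c 2) ≤ 1/6 := by
    have h1 : c 0 + c 1 + c 2 ≤ K := by
      have := le_abs_self (c 0); have := le_abs_self (c 1); have := le_abs_self (c 2); linarith
    nlinarith [mul_le_mul_of_nonneg_left h1 hε0.le, hεK]
  -- positivity of weights
  have hw1pos : ∀ i, 0 < w1 i := by
    intro i; fin_cases i <;> simp [hw1] <;> linarith
  have hw2pos : ∀ i, 0 < w2 i := by
    intro i
    fin_cases i <;> simp [hw2]
    · linarith
    · nlinarith [neg_abs_le (c 0), habs0, hε0]
    · nlinarith [neg_abs_le (c 1), habs1, hε0]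
    · positivity
  -- the two point families and affine bases
  set p1 : Fin 4 → E3 := ![P0, P1, A, B] with hp1
  set p2 : Fin 4 → E3 := ![P0, P1, B, C] with hp2
  have hai1 : AffineIndependent ℝ p1 := stmt6_ai4 _ _ _ _ h1
  have hai2 : AffineIndependent ℝ p2 := stmt6_ai4 _ _ _ _ h2
  set b1 : AffineBasis (Fin 4) ℝ E3 := ⟨p1, hai1, stmt6_span4 _ _ _ _ hai1⟩ with hb1
  set b2 : AffineBasis (Fin 4) ℝ E3 := ⟨p2, hai2, stmt6_span4 _ _ _ _ hai2⟩ with hb2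
  have hb1coe : ⇑b1 = p1 := rfl
  have hb2coe : ⇑b2 = p2 := rfl
  -- the common point
  set z : E3 := Finset.univ.affineCombination ℝ p1 w1 with hzdef
  have hz2 : z = Finset.univ.affineCombination ℝ p2 w2 := by
    rw [hzdef,
      Finset.affineCombination_eq_weightedVSubOfPoint_vadd_of_sum_eq_one _ w1 p1 hw1sum P0,
      Finset.affineCombination_eq_weightedVSubOfPoint_vadd_of_sum_eq_one _ w2 p2 hw2sum P0]
    congr 1
    rw [Finset.weightedVSubOfPoint_apply, Finset.weightedVSubOfPoint_apply]
    simp only [Fin.sum_univ_four, hp1, hp2, hw1, hw2, Matrix.cons_val_zero, Matrix.cons_val_one,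
      Matrix.head_cons, Matrix.cons_val_two, Matrix.tail_cons, Matrix.cons_val_three]
    have hvs : ∀ x y : E3, x -ᵥ y = x - y := fun _ _ => rfl
    simp only [hvs]
    rw [hrepr]
    module
  have hmem1 : z ∈ interior (convexHull ℝ ({P0, P1, A, B} : Set E3)) := by
    have : ({P0, P1, A, B} : Set E3) = range ⇑b1 := by rw [hb1coe, hp1, stmt6_range4]
    rw [this, b1.interior_convexHull]
    intro i
    have hcoord : b1.coord i z = w1 i := by
      rw [hzdef, ← hb1coe]
      exact b1.coord_apply_combination_of_mem (Finset.mem_univ i) hw1sum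
    rw [hcoord]; exact hw1pos i
  have hmem2 : z ∈ interior (convexHull ℝ ({P0, P1, B, C} : Set E3)) := by
    have : ({P0, P1, B, C} : Set E3) = range ⇑b2 := by rw [hb2coe, hp2, stmt6_range4]
    rw [this, b2.interior_convexHull]
    intro i
    have hcoord : b2.coord i z = w2 i := by
      rw [hz2, ← hb2coe]
      exact b2.coord_apply_combination_of_mem (Finset.mem_univ i) hw2sum
    rw [hcoord]; exact hw2pos i
  rw [Set.not_disjoint_iff]
  exact ⟨z, hmem1, hmem2⟩

end Aux

theorem stmt_6 (m : ℕ) [NeZero m] (hm : 3 ≤ m)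
    (Pi Pj : EuclideanSpace ℝ (Fin 3)) (Q : ZMod m → EuclideanSpace ℝ (Fin 3))
    (hind : ∀ α : ZMod m,
      LinearIndependent ℝ ![Pj - Pi, Q α - Pi, Q (α + 1) - Pi])
    (δ : ZMod m → ℝ)
    (hδ : ∀ α : ZMod m,
      δ α = (Matrix.of fun p q : Fin 3 =>
        (![Pj - Pi, Q α - Pi, Q (α + 1) - Pi] q) p).det)
    (T : ZMod m → Set (EuclideanSpace ℝ (Fin 3)))
    (hT : ∀ α : ZMod m, T α = convexHull ℝ {Pi, Pj, Q α, Q (α + 1)})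
    (hdisj : Pairwise fun α β : ZMod m => Disjoint (interior (T α)) (interior (T β)))
    (gi gj : ZMod m → EuclideanSpace ℝ (Fin 3))
    (hgi1 : ∀ α : ZMod m, ⟪gi α, Pi - Pj⟫ = 1)
    (hgi0 : ∀ α : ZMod m, ⟪gi α, Q α - Pj⟫ = 0)
    (hgi0' : ∀ α : ZMod m, ⟪gi α, Q (α + 1) - Pj⟫ = 0)
    (hgj1 : ∀ α : ZMod m, ⟪gj α, Pj - Pi⟫ = 1)
    (hgj0 : ∀ α : ZMod m, ⟪gj α, Q α - Pi⟫ = 0)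
    (hgj0' : ∀ α : ZMod m, ⟪gj α, Q (α + 1) - Pi⟫ = 0)
    (M : Matrix (Fin 3) (Fin 3) ℝ)
    (hM : ∀ q s : Fin 3, M q s = ∑ α : ZMod m, |δ α| / 6 * (gj α) s * (gi α) q) :
    M = Mᵀ := by
  classical
  have hsub : ∀ (x y : EuclideanSpace ℝ (Fin 3)) (p : Fin 3), (x - y) p = x p - y p :=
    fun _ _ _ => rfl
  have hδpoly : ∀ α : ZMod m, δ α
      = (Pj 0 - Pi 0) * ((Q α 1 - Pi 1) * (Q (α+1) 2 - Pi 2) - (Q α 2 - Pi 2) * (Q (α+1) 1 - Pi 1))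
      - (Pj 1 - Pi 1) * ((Q α 0 - Pi 0) * (Q (α+1) 2 - Pi 2) - (Q α 2 - Pi 2) * (Q (α+1) 0 - Pi 0))
      + (Pj 2 - Pi 2) * ((Q α 0 - Pi 0) * (Q (α+1) 1 - Pi 1) - (Q α 1 - Pi 1) * (Q (α+1) 0 - Pi 0)) := by
    intro α
    rw [hδ α, stmt6_det3_coords]
    simp [hsub]
  have hδne : ∀ α : ZMod m, δ α ≠ 0 := fun α => by
    rw [hδ α]; exact stmt6_det_ne_zero _ (hind α)
  -- the key per-tetrahedron identities
  have hkey : ∀ α : ZMod m,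
      δ α * (gi α 1 * gj α 2 - gi α 2 * gj α 1) = Q (α+1) 0 - Q α 0 ∧
      δ α * (gi α 2 * gj α 0 - gi α 0 * gj α 2) = Q (α+1) 1 - Q α 1 ∧
      δ α * (gi α 0 * gj α 1 - gi α 1 * gj α 0) = Q (α+1) 2 - Q α 2 := by
    intro α
    have h1 := hgi1 α; rw [stmt6_hIP] at h1; simp only [hsub] at h1
    have h2 := hgi0 α; rw [stmt6_hIP] at h2; simp only [hsub] at h2
    have h3 := hgi0' α; rw [stmt6_hIP] at h3; simp only [hsub] at h3
    have h4 := hgj1 α; rw [stmt6_hIP] at h4; simp only [hsub] at h4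
    have h5 := hgj0 α; rw [stmt6_hIP] at h5; simp only [hsub] at h5
    have h6 := hgj0' α; rw [stmt6_hIP] at h6; simp only [hsub] at h6
    obtain ⟨k1, k2, k3⟩ := stmt6_cross_key (fun p => Pj p - Pi p) (fun p => Q α p - Pi p)
      (fun p => Q (α+1) p - Pi p) (fun p => gi α p) (fun p => gj α p) (δ α)
      (by linear_combination hδpoly α) (hδne α)
      (by linear_combination -h1) (by linear_combination h2 - h1) (by linear_combination h3 - h1)
      (by linear_combination h4) (by linear_combination h5) (by linear_combination h6)
    exact ⟨by linear_combination k1, by linear_combination k2, by linear_combination k3⟩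
  -- sign constancy around the fan
  have hαne : ∀ α : ZMod m, α ≠ α + 1 := by
    intro α h
    have h10 : (1 : ZMod m) = 0 := by
      have := congrArg (fun x => x - α) h
      simpa using this.symm
    rw [show ((1 : ZMod m)) = ((1 : ℕ) : ZMod m) by norm_num] at h10
    have := (ZMod.natCast_eq_zero_iff 1 m).1 h10
    have := Nat.le_of_dvd one_pos this
    omega
  have hprod : ∀ α : ZMod m, 0 < δ α * δ (α + 1) := by
    intro α
    rcases lt_trichotomy (δ α * δ (α + 1)) 0 with h | h | h
    · exfalso
      have hdis : Disjoint (interior (T α)) (interior (T (α+1))) := hdisj (hαne α)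
      rw [hT α, hT (α+1)] at hdis
      have e2 : α + 1 + 1 = α + 2 := by ring
      rw [e2] at hdis
      have hind' := hind (α+1); rw [e2] at hind'
      have hδ' := hδ (α+1); rw [e2] at hδ'
      exact stmt6_not_disjoint Pi Pj (Q α) (Q (α+1)) (Q (α+2)) (hind α) hind'
        (δ α) (δ (α+1)) (hδ α) hδ' h hdis
    · exfalso
      rcases mul_eq_zero.1 h with h' | h'
      exacts [hδne α h', hδne _ h']
    · exact h
  have hstep : ∀ α : ZMod m, (0 < δ (α + 1) ↔ 0 < δ α) := by
    intro α
    rcases mul_pos_iff.1 (hprod α) with ⟨ha, hb⟩ | ⟨ha, hb⟩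
    · exact iff_of_true hb ha
    · exact iff_of_false (not_lt.2 hb.le) (not_lt.2 ha.le)
  have hnat : ∀ n : ℕ, (0 < δ (n : ZMod m) ↔ 0 < δ 0) := by
    intro n
    induction n with
    | zero => norm_num
    | succ k ih =>
      have : ((k + 1 : ℕ) : ZMod m) = (k : ZMod m) + 1 := by push_cast; ring
      rw [this, hstep]
      exact ih
  have hsign : ∀ α : ZMod m, (0 < δ α ↔ 0 < δ 0) := by
    intro α
    have h := ZMod.natCast_rightInverse (n := m) α
    rw [← h]
    exact hnat α.val
  set σ : ℝ := if 0 < δ 0 then 1 else -1 with hσ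
  have habs : ∀ α : ZMod m, |δ α| = σ * δ α := by
    intro α
    by_cases h0 : 0 < δ 0
    · have := (hsign α).2 h0
      rw [hσ, if_pos h0, one_mul, abs_of_pos this]
    · have hneg : δ α < 0 := by
        rcases lt_trichotomy (δ α) 0 with h | h | h
        · exact h
        · exact absurd h (hδne α)
        · exact absurd ((hsign α).1 h) h0
      rw [hσ, if_neg h0, abs_of_neg hneg]; ring
  -- symmetry via telescoping
  have main : ∀ q s k : Fin 3,
      (∀ α : ZMod m, δ α * (gi α q * gj α s - gi α s * gj α q) = Q (α+1) k - Q α k) →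
      M q s = M s q := by
    intro q s k hk
    rw [hM q s, hM s q, ← sub_eq_zero, ← Finset.sum_sub_distrib]
    have hterm : ∀ α ∈ Finset.univ, (|δ α| / 6 * gj α s * gi α q - |δ α| / 6 * gj α q * gi α s)
        = σ/6 * Q (α+1) k - σ/6 * Q α k := by
      intro α _
      have hh1 := hk α
      have hh2 := habs α
      linear_combination (gj α s * gi α q - gj α q * gi α s)/6 * hh2 + σ/6 * hh1
    rw [Finset.sum_congr rfl hterm, Finset.sum_sub_distrib, sub_eq_zero]
    exact Fintype.sum_equiv (Equiv.addRight (1 : ZMod m)) _ _ (fun α => by simp)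
  have k12 : ∀ α : ZMod m, δ α * (gi α 1 * gj α 2 - gi α 2 * gj α 1) = Q (α+1) 0 - Q α 0 :=
    fun α => (hkey α).1
  have k20 : ∀ α : ZMod m, δ α * (gi α 2 * gj α 0 - gi α 0 * gj α 2) = Q (α+1) 1 - Q α 1 :=
    fun α => (hkey α).2.1
  have k01 : ∀ α : ZMod m, δ α * (gi α 0 * gj α 1 - gi α 1 * gj α 0) = Q (α+1) 2 - Q α 2 :=
    fun α => (hkey α).2.2
  ext q s
  rw [Matrix.transpose_apply]
  fin_cases q <;> fin_cases s
  · rfl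
  · exact main 0 1 2 k01
  · exact (main 2 0 1 k20).symm
  · exact (main 0 1 2 k01).symm
  · rfl
  · exact main 1 2 0 k12
  · exact main 2 0 1 k20
  · exact (main 1 2 0 k12).symm
  · rfl
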